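/- Let C be a pure submonoid of (ℤⁿ, +), i.e., whenever kα ∈ C for some k ∈ ℕ, k ≥ 1 and α ∈ ℤⁿ, then α ∈ C. Then ℤⁿ ∩ conv(C) = C, where conv(C) is the convex hull of C in ℝⁿ. -/

import Mathlib

/-- Canonical embedding of `ℤⁿ` into `ℝⁿ`. -/
def coeR {n : ℕ} (α : Fin n → ℤ) : Fin n → ℝ := fun i => (α i : ℝ)

/-- Convex hull in `ℝⁿ` of a subset of `ℤⁿ`. -/
def convC {n : ℕ} (C : Set (Fin n → ℤ)) : Set (Fin n → ℝ) :=
  convexHull ℝ (coeR '' C)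

/-- The closure `cl(C) = ℤⁿ ∩ topological-closure(conv C)` of a subset of `ℤⁿ`. -/
def intCl {n : ℕ} (C : Set (Fin n → ℤ)) : Set (Fin n → ℤ) :=
  {α | coeR α ∈ closure (convC C)}

/-- `C` is pure: `kα ∈ C` with `k ≥ 1` implies `α ∈ C`. -/
def IsPure {n : ℕ} (C : Set (Fin n → ℤ)) : Prop :=
  ∀ (k : ℕ) (α : Fin n → ℤ), 1 ≤ k → k • α ∈ C → α ∈ C

/-- `C` is a submonoid of `(ℤⁿ, +)` (as a set). -/
def IsSubmonoidSet {n : ℕ} (C : Set (Fin n → ℤ)) : Prop :=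
  (0 : Fin n → ℤ) ∈ C ∧ ∀ a ∈ C, ∀ b ∈ C, a + b ∈ C

/-- `M` is a finitely generated monoid (as a subset of `ℤⁿ`). -/
def IsFGSet {n : ℕ} (M : Set (Fin n → ℤ)) : Prop :=
  ∃ F : Finset (Fin n → ℤ),
    (AddSubmonoid.closure (F : Set (Fin n → ℤ)) : Set (Fin n → ℤ)) = M

/-- `C` is almost prismal: for every real subspace `V ⊆ ℝⁿ`, `cl(C ∩ V)` is finitely generated. -/
def AlmostPrismal {n : ℕ} (C : Set (Fin n → ℤ)) : Prop :=
  ∀ V : Submodule ℝ (Fin n → ℝ), IsFGSet (intCl {α ∈ C | coeR α ∈ V})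

/-- `C` is prismal: pure and almost prismal. -/
def Prismal {n : ℕ} (C : Set (Fin n → ℤ)) : Prop := IsPure C ∧ AlmostPrismal C

open Module

def coeQR {n : ℕ} (x : Fin n → ℚ) : Fin n → ℝ := fun j => (x j : ℝ)

lemma coeQR_sum_smul {n : ℕ} {ι : Type*} [Fintype ι] (v : ι → ℚ) (u : ι → (Fin n → ℚ)) :
    coeQR (∑ i, v i • u i) = ∑ i, (v i : ℝ) • coeQR (u i) := by
  funext j
  simp [coeQR, Finset.sum_apply, Pi.smul_apply, smul_eq_mul]

lemma mem_span_rat_of_mem_span_real {n : ℕ} {ι : Type*} [Fintype ι]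
    (u : ι → (Fin n → ℚ)) (d : Fin n → ℚ)
    (h : coeQR d ∈ Submodule.span ℝ (Set.range fun i => coeQR (u i))) :
    d ∈ Submodule.span ℚ (Set.range u) := by
  classical
  by_contra hd
  obtain ⟨f, hfd, hfmap⟩ := Submodule.exists_dual_map_eq_bot_of_notMem hd inferInstance
  have hfu : ∀ i, f (u i) = 0 := by
    intro i
    have h1 : f (u i) ∈ (Submodule.span ℚ (Set.range u)).map f :=
      Submodule.mem_map_of_mem (Submodule.subset_span ⟨i, rfl⟩)
    rw [hfmap] at h1
    exact (Submodule.mem_bot ℚ).mp h1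
  set F : (Fin n → ℝ) →ₗ[ℝ] ℝ :=
    ∑ j, ((f fun k => if j = k then 1 else 0 : ℚ) : ℝ) • LinearMap.proj j with hFdef
  have hFapp : ∀ x : Fin n → ℚ, F (coeQR x) = (f x : ℝ) := by
    intro x
    rw [LinearMap.pi_apply_eq_sum_univ f x]
    push_cast [smul_eq_mul]
    simp [hFdef, LinearMap.sum_apply, LinearMap.smul_apply, LinearMap.proj_apply, coeQR,
      smul_eq_mul, mul_comm]
  rw [Submodule.mem_span_range_iff_exists_fun] at h
  obtain ⟨c, hc⟩ := h
  have h0 : F (coeQR d) = 0 := by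
    rw [← hc, map_sum]
    simp only [map_smul, hFapp, hfu]
    simp
  rw [hFapp] at h0
  exact hfd (by exact_mod_cast h0)

lemma sum_subtype_ne {ι : Type*} [Fintype ι] [DecidableEq ι] (i₀ : ι) {M : Type*}
    [AddCommMonoid M] (g : ι → M) :
    (∑ i : {i // i ≠ i₀}, g i) = ∑ i ∈ Finset.univ.erase i₀, g i := by
  exact (Finset.sum_subtype (Finset.univ.erase i₀) (fun x => by simp) g).symm

/-- For a pure submonoid `C` of `ℤⁿ` we have `ℤⁿ ∩ conv(C) = C`. -/
theorem int_inter_convexHull_of_pure {n : ℕ} (C : Set (Fin n → ℤ))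
    (hC : IsSubmonoidSet C) (hpure : IsPure C) :
    {α : Fin n → ℤ | coeR α ∈ convC C} = C := by
  classical
  ext α
  simp only [Set.mem_setOf_eq]
  constructor
  · intro hα
    obtain ⟨ι, hι, z, w, hz, hai, hw0, hw1, hwx⟩ :=
      eq_pos_convex_span_of_mem_convexHull hα
    have hcz : ∀ i, ∃ b ∈ C, coeR b = z i := fun i => hz ⟨i, rfl⟩
    choose c hcC hcz using hcz
    have hne : Nonempty ι := by
      rcases isEmpty_or_nonempty ι with h | h
      · rw [Finset.univ_eq_empty, Finset.sum_empty] at hw1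
        exact absurd hw1 (by norm_num)
      · exact h
    obtain ⟨i₀⟩ := hne
    set S := {i // i ≠ i₀}
    -- key sum identity
    have key : ∑ i : S, w i • (coeR (c i) - coeR (c i₀)) = coeR α - coeR (c i₀) := by
      simp_rw [hcz]
      rw [sum_subtype_ne i₀ (fun i => w i • (z i - z i₀))]
      rw [Finset.sum_erase _ (by simp)]
      simp [smul_sub, Finset.sum_sub_distrib, ← Finset.sum_smul, hw1, hwx]
    -- linear independence
    have hli : LinearIndependent ℝ fun i : S => coeR (c i) - coeR (c i₀) := by
      simp_rw [hcz]
      have := (affineIndependent_iff_linearIndependent_vsub ℝ z i₀).mp hai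
      simpa [vsub_eq_sub] using this
    -- rational data
    set cQ : ι → (Fin n → ℚ) := fun i j => (c i j : ℚ) with hcQdef
    set aQ : Fin n → ℚ := fun j => (α j : ℚ) with haQdef
    have hcQ : ∀ i, coeQR (cQ i) = coeR (c i) := fun i => by
      funext j; simp [coeQR, coeR, hcQdef]
    have haQ : coeQR aQ = coeR α := by funext j; simp [coeQR, coeR, haQdef]
    set uQ : S → (Fin n → ℚ) := fun i => cQ i - cQ i₀ with huQdef
    set dQ : Fin n → ℚ := aQ - cQ i₀ with hdQdef
    have huQ : ∀ i : S, coeQR (uQ i) = coeR (c i) - coeR (c i₀) := fun i => by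
      funext j
      simp [coeQR, coeR, huQdef, hcQdef]
    have hdQ : coeQR dQ = coeR α - coeR (c i₀) := by
      funext j
      simp [coeQR, coeR, hdQdef, hcQdef, haQdef]
    have hmem : coeQR dQ ∈ Submodule.span ℝ (Set.range fun i : S => coeQR (uQ i)) := by
      rw [Submodule.mem_span_range_iff_exists_fun]
      refine ⟨fun i => w i, ?_⟩
      simp_rw [huQ, hdQ]
      exact key
    obtain ⟨v, hv⟩ := Submodule.mem_span_range_iff_exists_fun ℚ |>.mp
      (mem_span_rat_of_mem_span_real uQ dQ hmem)
    have hv' : ∑ i : S, (v i : ℝ) • (coeR (c i) - coeR (c i₀)) = coeR α - coeR (c i₀) := by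
      have h1 := congrArg coeQR hv
      rw [coeQR_sum_smul] at h1
      simpa [huQ, hdQ] using h1
    have hwv : ∀ i : S, w i.1 = (v i : ℝ) := by
      have hsub : ∑ i : S, (w i.1 - (v i : ℝ)) • (coeR (c i) - coeR (c i₀)) = 0 := by
        simp [sub_smul, Finset.sum_sub_distrib, key, hv']
      have h2 := Fintype.linearIndependent_iff.mp hli _ hsub
      intro i
      have := h2 i
      linarith
    -- all weights rational
    set V : ι → ℚ := fun i => if h : i = i₀ then 1 - ∑ i : S, v i else v ⟨i, h⟩ with hVdef
    have hVw : ∀ i, (V i : ℝ) = w i := by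
      intro i
      by_cases h : i = i₀
      · subst h
        have hsplit : w i + ∑ j : S, w j.1 = 1 := by
          rw [sum_subtype_ne i (fun j => w j), Finset.add_sum_erase _ w (Finset.mem_univ i)]
          exact hw1
        simp only [hVdef, dif_pos]
        push_cast
        have : ∑ j : S, (v j : ℝ) = ∑ j : S, w j.1 :=
          Finset.sum_congr rfl fun j _ => (hwv j).symm
        rw [this]
        linarith
      · simp only [hVdef, dif_neg h]
        exact (hwv ⟨i, h⟩).symm
    have hVpos : ∀ i, 0 < V i := by
      intro i
      have := hw0 i
      rw [← hVw i] at this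
      exact_mod_cast this
    have hV1 : ∑ i, V i = 1 := by
      have : ((∑ i, V i : ℚ) : ℝ) = 1 := by
        push_cast
        simp_rw [hVw]
        exact hw1
      exact_mod_cast this
    have hVsum : ∑ i, V i • cQ i = aQ := by
      have hQ : coeQR (∑ i, V i • cQ i) = coeQR aQ := by
        rw [coeQR_sum_smul]
        simp_rw [hVw, hcQ, hcz, haQ]
        exact hwx
      funext j
      have := congrFun hQ j
      exact Rat.cast_injective this
    -- clear denominators
    set N : ℕ := ∏ i, (V i).den with hNdef
    have hNpos : 0 < N := Finset.prod_pos fun i _ => (V i).pos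
    have hdvd : ∀ i, (V i).den ∣ N := fun i => Finset.dvd_prod_of_mem _ (Finset.mem_univ i)
    choose m hm using hdvd
    set p : ι → ℕ := fun i => (V i).num.toNat * m i with hpdef
    have hp : ∀ i, (p i : ℚ) = V i * N := by
      intro i
      have h1 : ((V i).num.toNat : ℤ) = (V i).num :=
        Int.toNat_of_nonneg (Rat.num_pos.mpr (hVpos i)).le
      have h2 : (V i) * ((V i).den : ℚ) = ((V i).num : ℚ) := by
        exact_mod_cast Rat.mul_den_eq_num (V i)
      have h1' : (((V i).num.toNat : ℕ) : ℚ) = ((V i).num : ℚ) := by exact_mod_cast h1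
      calc (p i : ℚ) = ((V i).num : ℚ) * (m i : ℚ) := by
            simp only [hpdef]
            push_cast
            rw [h1']
        _ = (V i * ((V i).den : ℚ)) * (m i : ℚ) := by rw [h2]
        _ = V i * N := by
            rw [mul_assoc, ← Nat.cast_mul, ← hm i]
    have hpsum : ∑ i, p i = N := by
      have : ((∑ i, p i : ℕ) : ℚ) = (N : ℚ) := by
        push_cast
        simp_rw [hp]
        rw [← Finset.sum_mul, hV1, one_mul]
      exact_mod_cast this
    have hkey : N • α = ∑ i, p i • c i := by
      funext j
      have hj := congrFun hVsum j
      simp only [Finset.sum_apply, Pi.smul_apply, smul_eq_mul] at hj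
      simp only [hcQdef, haQdef] at hj
      have hQ : ((N • α) j : ℚ) = ((∑ i, p i • c i) j : ℚ) := by
        simp only [Pi.smul_apply, Finset.sum_apply, smul_eq_mul]
        push_cast [nsmul_eq_mul, smul_eq_mul]
        rw [← hj, Finset.mul_sum]
        refine Finset.sum_congr rfl fun i _ => ?_
        rw [hp]
        ring
      exact_mod_cast hQ
    set M : AddSubmonoid (Fin n → ℤ) :=
      { carrier := C
        zero_mem' := hC.1
        add_mem' := fun ha hb => hC.2 _ ha _ hb } with hMdef
    have hsum_mem : ∑ i, p i • c i ∈ M :=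
      AddSubmonoid.sum_mem _ fun i _ =>
        AddSubmonoid.nsmul_mem M (show c i ∈ M from hcC i) (p i)
    have hNα : N • α ∈ C := by rw [hkey]; exact hsum_mem
    exact hpure N α hNpos hNα
  · intro hα
    exact subset_convexHull ℝ _ ⟨α, hα, rfl⟩
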